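/- If there exists a 3-(v,k,1) design with 3 ≤ k < v, then v ≥ k² - 3k + 4; in particular k ≤ ⌊√v⌋ + 2. -/

import Mathlib

/-- If a `3`-`(v,k,1)` design with `3 ≤ k < v` exists, then `v ≥ k² - 3k + 4`;
in particular `k ≤ ⌊√v⌋ + 2`. -/
theorem design_v_ge
    (P : Type*) [Fintype P] [DecidableEq P]
    (𝓑 : Finset (Finset P)) (v k : ℕ)
    (hv : Fintype.card P = v)
    (hk3 : 3 ≤ k) (hkv : k < v)
    (hblocks : ∀ b ∈ 𝓑, b.card = k)
    (hdesign : ∀ s : Finset P, s.card = 3 →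
      (𝓑.filter (fun b => s ⊆ b)).card = 1) :
    k ^ 2 - 3 * k + 4 ≤ v ∧ k ≤ Nat.sqrt v + 2 := by
  classical
  -- uniqueness of the block through a triple
  have uniq : ∀ s : Finset P, s.card = 3 → ∀ b1 ∈ 𝓑, ∀ b2 ∈ 𝓑,
      s ⊆ b1 → s ⊆ b2 → b1 = b2 := by
    intro s hs b1 h1 b2 h2 hs1 hs2
    obtain ⟨c, hc⟩ := Finset.card_eq_one.mp (hdesign s hs)
    have m1 : b1 ∈ 𝓑.filter (fun b => s ⊆ b) := Finset.mem_filter.mpr ⟨h1, hs1⟩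
    have m2 : b2 ∈ 𝓑.filter (fun b => s ⊆ b) := Finset.mem_filter.mpr ⟨h2, hs2⟩
    rw [hc, Finset.mem_singleton] at m1 m2
    rw [m1, m2]
  -- existence of a block through a triple
  have exb : ∀ s : Finset P, s.card = 3 → ∃ b ∈ 𝓑, s ⊆ b := by
    intro s hs
    have h := hdesign s hs
    have : (𝓑.filter (fun b => s ⊆ b)).Nonempty := by
      rw [← Finset.card_pos, h]; norm_num
    obtain ⟨b, hb⟩ := this
    exact ⟨b, (Finset.mem_filter.mp hb).1, (Finset.mem_filter.mp hb).2⟩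
  -- get a block B
  have hv3 : 3 ≤ (Finset.univ : Finset P).card := by
    rw [Finset.card_univ, hv]; omega
  obtain ⟨s, -, hs⟩ := Finset.exists_subset_card_eq hv3
  obtain ⟨B, hB𝓑, -⟩ := exb s hs
  have hBcard : B.card = k := hblocks B hB𝓑
  -- a point outside B
  have : ∃ x, x ∉ B := by
    by_contra h
    push_neg at h
    have : B = Finset.univ := Finset.eq_univ_iff_forall.mpr h
    rw [this, Finset.card_univ, hv] at hBcard
    omega
  obtain ⟨x, hxB⟩ := this
  -- a point inside B
  have hBne : B.Nonempty := by rw [← Finset.card_pos, hBcard]; omega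
  obtain ⟨p, hpB⟩ := hBne
  have hxp : x ≠ p := fun h => hxB (h ▸ hpB)
  -- blocks through x and p
  set F : Finset (Finset P) := 𝓑.filter (fun b => x ∈ b ∧ p ∈ b) with hF
  -- triple cardinality helper
  have tcard : ∀ q : P, q ≠ x → q ≠ p → ({x, p, q} : Finset P).card = 3 := by
    intro q hqx hqp
    rw [Finset.card_insert_of_notMem (by simp [hxp, hqx.symm]),
      Finset.card_insert_of_notMem (by simp [hqp.symm]), Finset.card_singleton]
  -- the map from B \ {p} to F
  have hg : ∀ q ∈ B.erase p, ∃ b ∈ 𝓑, ({x, p, q} : Finset P) ⊆ b := by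
    intro q hq
    have hqp : q ≠ p := Finset.ne_of_mem_erase hq
    have hqB : q ∈ B := Finset.mem_of_mem_erase hq
    have hqx : q ≠ x := fun h => hxB (h ▸ hqB)
    exact exb _ (tcard q hqx hqp)
  set g : P → Finset P := fun q =>
    if h : ∃ b ∈ 𝓑, ({x, p, q} : Finset P) ⊆ b then h.choose else ∅ with hgdef
  have hgspec : ∀ q ∈ B.erase p, g q ∈ 𝓑 ∧ ({x, p, q} : Finset P) ⊆ g q := by
    intro q hq
    have h := hg q hq
    simp only [hgdef, dif_pos h]
    exact ⟨h.choose_spec.1, h.choose_spec.2⟩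
  have hmaps : ∀ q ∈ B.erase p, g q ∈ F := by
    intro q hq
    obtain ⟨h1, h2⟩ := hgspec q hq
    refine Finset.mem_filter.mpr ⟨h1, h2 (by simp), h2 (by simp)⟩
  have hinj : Set.InjOn g (B.erase p) := by
    intro q1 hq1 q2 hq2 heq
    by_contra hne
    obtain ⟨hg1, hs1⟩ := hgspec q1 hq1
    obtain ⟨hg2, hs2⟩ := hgspec q2 hq2
    have hq1p : q1 ≠ p := Finset.ne_of_mem_erase hq1
    have hq2p : q2 ≠ p := Finset.ne_of_mem_erase hq2
    have hq1B : q1 ∈ B := Finset.mem_of_mem_erase hq1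
    have hq2B : q2 ∈ B := Finset.mem_of_mem_erase hq2
    -- the triple {p, q1, q2} lies in both g q1 and B
    have htc : ({p, q1, q2} : Finset P).card = 3 := by
      rw [Finset.card_insert_of_notMem (by simp [Ne.symm hq1p, Ne.symm hq2p]),
        Finset.card_insert_of_notMem (by simp [hne]), Finset.card_singleton]
    have hsub1 : ({p, q1, q2} : Finset P) ⊆ g q1 := by
      intro y hy
      simp only [Finset.mem_insert, Finset.mem_singleton] at hy
      rcases hy with rfl | rfl | rfl
      · exact hs1 (by simp)
      · exact hs1 (by simp)
      · rw [heq]; exact hs2 (by simp)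
    have hsub2 : ({p, q1, q2} : Finset P) ⊆ B := by
      intro y hy
      simp only [Finset.mem_insert, Finset.mem_singleton] at hy
      rcases hy with rfl | rfl | rfl
      · exact hpB
      · exact hq1B
      · exact hq2B
    have : g q1 = B := uniq _ htc _ hg1 _ hB𝓑 hsub1 hsub2
    exact hxB (this ▸ hs1 (by simp))
  have hFlb : k - 1 ≤ F.card := by
    have := Finset.card_le_card_of_injOn g hmaps hinj
    rwa [Finset.card_erase_of_mem hpB, hBcard] at this
  -- counting points: blocks in F are pairwise disjoint outside {x, p}
  have hdisj : (F : Set (Finset P)).PairwiseDisjoint (fun b => b \ {x, p}) := by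
    intro b1 h1 b2 h2 hne
    rw [Finset.mem_coe, hF, Finset.mem_filter] at h1 h2
    simp only [Function.onFun]
    rw [Finset.disjoint_left]
    intro y hy1 hy2
    simp only [Finset.mem_sdiff, Finset.mem_insert, Finset.mem_singleton] at hy1 hy2
    push_neg at hy1
    have hy1b := hy1.1
    have htc : ({x, p, y} : Finset P).card = 3 :=
      tcard y hy1.2.1 hy1.2.2
    have hsub1 : ({x, p, y} : Finset P) ⊆ b1 := by
      intro z hz
      simp only [Finset.mem_insert, Finset.mem_singleton] at hz
      rcases hz with rfl | rfl | rfl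
      · exact h1.2.1
      · exact h1.2.2
      · exact hy1b
    have hsub2 : ({x, p, y} : Finset P) ⊆ b2 := by
      intro z hz
      simp only [Finset.mem_insert, Finset.mem_singleton] at hz
      rcases hz with rfl | rfl | rfl
      · exact h2.2.1
      · exact h2.2.2
      · exact hy2.1
    exact hne (uniq _ htc _ h1.1 _ h2.1 hsub1 hsub2)
  have hbiu : (F.biUnion (fun b => b \ {x, p})).card = F.card * (k - 2) := by
    rw [Finset.card_biUnion (fun b1 h1 b2 h2 hne => hdisj h1 h2 hne)]
    rw [Finset.sum_congr rfl (fun b hb => ?_), Finset.sum_const, smul_eq_mul]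
    have hb' := Finset.mem_filter.mp hb
    rw [Finset.card_sdiff_of_subset (by
      intro z hz; simp only [Finset.mem_insert, Finset.mem_singleton] at hz
      rcases hz with rfl | rfl; exacts [hb'.2.1, hb'.2.2])]
    rw [hblocks b hb'.1, Finset.card_insert_of_notMem (by simp [hxp]),
      Finset.card_singleton]
  have hub : F.card * (k - 2) ≤ v - 2 := by
    rw [← hbiu]
    have hsub : F.biUnion (fun b => b \ {x, p}) ⊆ Finset.univ \ {x, p} := by
      intro y hy
      obtain ⟨b, -, hyb⟩ := Finset.mem_biUnion.mp hy
      simp only [Finset.mem_sdiff] at hyb ⊢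
      exact ⟨Finset.mem_univ y, hyb.2⟩
    calc (F.biUnion (fun b => b \ {x, p})).card
        ≤ (Finset.univ \ ({x, p} : Finset P)).card := Finset.card_le_card hsub
      _ = v - 2 := by
          rw [Finset.card_sdiff_of_subset (Finset.subset_univ _), Finset.card_univ, hv,
            Finset.card_insert_of_notMem (by simp [hxp]), Finset.card_singleton]
  have key : (k - 1) * (k - 2) ≤ v - 2 :=
    le_trans (Nat.mul_le_mul_right _ hFlb) hub
  -- arithmetic conclusion
  have h1 : 1 ≤ k := by omega
  have h2 : 2 ≤ k := by omega
  have h2v : 2 ≤ v := by omega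
  have key' : (k - 1) * (k - 2) + 2 ≤ v := by omega
  have hz : ((k : ℤ) - 1) * ((k : ℤ) - 2) + 2 ≤ (v : ℤ) := by
    zify [h1, h2] at key'
    linarith
  have hkk : 3 * k ≤ k ^ 2 := by nlinarith
  constructor
  · zify [hkk]
    nlinarith [hz]
  · have hk2 : (k - 2) * (k - 2) ≤ v := by
      zify [h2]
      nlinarith [hz]
    have := Nat.le_sqrt.mpr hk2
    omega
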